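/- For any 1-Lipschitz-type bound: if f : ℝ → ℝ is C¹ with bounded derivative and A, B are N×N real symmetric matrices with ordered eigenvalues λ₁(A) ≥ ... ≥ λ_N(A) and λ₁(B) ≥ ... ≥ λ_N(B), then |(1/N)∑_i f(λ_i(A)) - (1/N)∑_i f(λ_i(B))|² ≤ (‖f'‖_∞²/N) ∑_{i,j} (A_{ij} - B_{ij})². -/

import Mathlib

open Finset Matrix

lemma star_diag {N : ℕ} (μ : Fin N → ℝ) : star (diagonal μ) = diagonal μ := by
  simp [Matrix.star_eq_conjTranspose, Matrix.diagonal_conjTranspose]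

lemma sum_sq_eq_trace {N : ℕ} (M : Matrix (Fin N) (Fin N) ℝ) :
    ∑ i, ∑ j, M i j ^ 2 = Matrix.trace (M * star M) := by
  simp [Matrix.trace, Matrix.mul_apply, Matrix.star_apply, Matrix.diag, sq]

lemma sum_mul_eq_trace {N : ℕ} (M P : Matrix (Fin N) (Fin N) ℝ) :
    ∑ i, ∑ j, M i j * P i j = Matrix.trace (M * star P) := by
  simp [Matrix.trace, Matrix.mul_apply, Matrix.star_apply, Matrix.diag]

lemma trace_conj_sq {N : ℕ} (U : Matrix (Fin N) (Fin N) ℝ) (μ : Fin N → ℝ)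
    (hU : star U * U = 1) :
    Matrix.trace ((U * diagonal μ * star U) * star (U * diagonal μ * star U)) = ∑ i, μ i ^ 2 := by
  rw [StarMul.star_mul, StarMul.star_mul, star_star, star_diag]
  calc Matrix.trace ((U * diagonal μ * star U) * (U * (diagonal μ * star U)))
      = Matrix.trace (U * (diagonal μ * diagonal μ * star U)) := by
        rw [mul_assoc (U * diagonal μ), ← mul_assoc (star U), hU, one_mul]
        simp only [Matrix.mul_assoc]
    _ = ∑ i, μ i ^ 2 := by
        rw [Matrix.trace_mul_comm, mul_assoc, hU, mul_one, diagonal_mul_diagonal,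
          Matrix.trace_diagonal]
        simp [sq]

lemma conj_diag_apply {N : ℕ} (X : Matrix (Fin N) (Fin N) ℝ) (d : Fin N → ℝ) (i j : Fin N) :
    (X * diagonal d * star X) i j = ∑ k, X i k * d k * X j k := by
  simp [Matrix.mul_apply, Matrix.star_apply, diagonal, Finset.sum_mul, mul_comm, mul_left_comm]

lemma trace_diag_mul {N : ℕ} (μ : Fin N → ℝ) (M : Matrix (Fin N) (Fin N) ℝ) :
    Matrix.trace (diagonal μ * M) = ∑ i, μ i * M i i := by
  simp [Matrix.trace, Matrix.mul_apply, Matrix.diag, diagonal]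

lemma trace_cross {N : ℕ} (U V : Matrix (Fin N) (Fin N) ℝ) (μ ν : Fin N → ℝ) :
    Matrix.trace ((U * diagonal μ * star U) * star (V * diagonal ν * star V))
      = ∑ i, ∑ j, (star U * V) i j ^ 2 * (μ i * ν j) := by
  rw [StarMul.star_mul, StarMul.star_mul, star_star, star_diag]
  have h1 : (U * diagonal μ * star U) * (V * (diagonal ν * star V))
      = U * (diagonal μ * (star U * (V * (diagonal ν * star V)))) := by
    simp only [Matrix.mul_assoc]
  have h2 : (diagonal μ * (star U * (V * (diagonal ν * star V)))) * U
      = diagonal μ * ((star U * V) * diagonal ν * star (star U * V)) := by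
    rw [StarMul.star_mul, star_star]
    simp only [Matrix.mul_assoc]
  rw [h1, Matrix.trace_mul_comm, h2, trace_diag_mul]
  rw [Finset.sum_congr rfl fun i _ => congrArg (fun x => μ i * x)
    (conj_diag_apply (star U * V) ν i i)]
  simp only [Finset.mul_sum]
  refine Finset.sum_congr rfl fun i _ => Finset.sum_congr rfl fun j _ => by ring

lemma ds_bound {N : ℕ} {S : Matrix (Fin N) (Fin N) ℝ} (hS : S ∈ doublyStochastic ℝ (Fin N))
    {μ ν : Fin N → ℝ} (h : Monovary μ ν) :
    ∑ i, ∑ j, S i j * (μ i * ν j) ≤ ∑ i, μ i * ν i := by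
  obtain ⟨w, hw0, hw1, hwS⟩ := exists_eq_sum_perm_of_mem_doublyStochastic hS
  have key : ∑ i, ∑ j, S i j * (μ i * ν j)
      = ∑ p : Equiv.Perm (Fin N), w p * ∑ i, μ i * ν (p i) := by
    rw [← hwS]
    have step : ∀ i, ∑ j, (∑ p : Equiv.Perm (Fin N), w p • p.permMatrix ℝ) i j * (μ i * ν j)
        = ∑ p : Equiv.Perm (Fin N), w p * (μ i * ν (p i)) := by
      intro i
      simp only [Matrix.sum_apply, Matrix.smul_apply, PEquiv.toMatrix_apply,
        Equiv.toPEquiv_apply, Option.mem_def, Option.some.injEq, smul_eq_mul,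
        Finset.sum_mul]
      rw [Finset.sum_comm]
      refine Finset.sum_congr rfl fun p _ => ?_
      simp [mul_ite, Finset.sum_ite_eq, Finset.sum_ite_eq']
    rw [Finset.sum_congr rfl fun i _ => step i, Finset.sum_comm]
    simp [Finset.mul_sum]
  rw [key]
  calc ∑ p : Equiv.Perm (Fin N), w p * ∑ i, μ i * ν (p i)
      ≤ ∑ p : Equiv.Perm (Fin N), w p * ∑ i, μ i * ν i := by
        refine Finset.sum_le_sum fun p _ => mul_le_mul_of_nonneg_left ?_ (hw0 p)
        exact h.sum_mul_comp_perm_le_sum_mul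
    _ = ∑ i, μ i * ν i := by rw [← Finset.sum_mul, hw1, one_mul]

lemma hw_key {N : ℕ} (U V : Matrix (Fin N) (Fin N) ℝ) (μ ν : Fin N → ℝ)
    (hU : star U * U = 1) (hV : star V * V = 1) (h : Monovary μ ν) :
    ∑ i, (μ i - ν i) ^ 2
      ≤ ∑ i, ∑ j, ((U * diagonal μ * star U) i j - (V * diagonal ν * star V) i j) ^ 2 := by
  set A := U * diagonal μ * star U with hAdef
  set B := V * diagonal ν * star V with hBdef
  have hU' : U * star U = 1 := mul_eq_one_comm.mp hU
  have hV' : V * star V = 1 := mul_eq_one_comm.mp hV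
  set W := star U * V with hWdef
  have hW1 : W * star W = 1 := by
    rw [hWdef, StarMul.star_mul, star_star, Matrix.mul_assoc, ← Matrix.mul_assoc V, hV',
      Matrix.one_mul, hU]
  have hW2 : star W * W = 1 := by
    rw [hWdef, StarMul.star_mul, star_star, Matrix.mul_assoc, ← Matrix.mul_assoc U, hU',
      Matrix.one_mul, hV]
  have hds : (Matrix.of fun i j => W i j ^ 2) ∈ doublyStochastic ℝ (Fin N) := by
    rw [mem_doublyStochastic_iff_sum]
    refine ⟨fun i j => sq_nonneg _, fun i => ?_, fun j => ?_⟩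
    · have := congrFun (congrFun hW1 i) i
      simpa [Matrix.mul_apply, Matrix.star_apply, Matrix.one_apply, sq] using this
    · have := congrFun (congrFun hW2 j) j
      simpa [Matrix.mul_apply, Matrix.star_apply, Matrix.one_apply, sq] using this
  have t1 : ∑ i, ∑ j, A i j ^ 2 = ∑ i, μ i ^ 2 := by
    rw [sum_sq_eq_trace]; exact trace_conj_sq U μ hU
  have t2 : ∑ i, ∑ j, B i j ^ 2 = ∑ i, ν i ^ 2 := by
    rw [sum_sq_eq_trace]; exact trace_conj_sq V ν hV
  have t3 : ∑ i, ∑ j, A i j * B i j ≤ ∑ i, μ i * ν i := by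
    rw [sum_mul_eq_trace, hAdef, hBdef, trace_cross]
    have := ds_bound hds h
    simpa [Matrix.of_apply] using this
  have lhs : ∑ i, (μ i - ν i) ^ 2
      = ∑ i, μ i ^ 2 + ∑ i, ν i ^ 2 - 2 * ∑ i, μ i * ν i := by
    simp only [sub_sq]
    rw [Finset.sum_add_distrib, Finset.sum_sub_distrib, Finset.mul_sum]
    ring_nf
  have rhs : ∑ i, ∑ j, (A i j - B i j) ^ 2
      = ∑ i, ∑ j, A i j ^ 2 + ∑ i, ∑ j, B i j ^ 2 - 2 * ∑ i, ∑ j, A i j * B i j := by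
    simp only [sub_sq, Finset.sum_add_distrib, Finset.sum_sub_distrib, mul_assoc,
      ← Finset.mul_sum]
    ring
  rw [lhs, rhs, t1, t2]
  linarith

lemma perm_unitary {N : ℕ} (U0 : Matrix (Fin N) (Fin N) ℝ) (σ : Equiv.Perm (Fin N))
    (hU0 : star U0 * U0 = 1) : star (U0.submatrix id ⇑σ) * U0.submatrix id ⇑σ = 1 := by
  ext k l
  have h := congrFun (congrFun hU0 (σ k)) (σ l)
  simp only [Matrix.mul_apply, Matrix.star_apply, Matrix.submatrix_apply, id_eq,
    Matrix.one_apply, star_trivial] at h ⊢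
  rw [h]
  simp [EmbeddingLike.apply_eq_iff_eq]

lemma perm_decomp {N : ℕ} (U0 : Matrix (Fin N) (Fin N) ℝ) (lam : Fin N → ℝ)
    (σ : Equiv.Perm (Fin N)) :
    U0 * diagonal lam * star U0
      = (U0.submatrix id ⇑σ) * diagonal (lam ∘ ⇑σ) * star (U0.submatrix id ⇑σ) := by
  ext i j
  rw [conj_diag_apply, conj_diag_apply]
  rw [← Equiv.sum_comp σ (fun m => U0 i m * lam m * U0 j m)]
  simp [Matrix.submatrix_apply]

theorem empirical_lipschitz_bound (N : ℕ) (hN : 1 ≤ N)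
    (A B : Matrix (Fin N) (Fin N) ℝ)
    (hA : A.IsHermitian) (hB : B.IsHermitian)
    (μ ν : Fin N → ℝ)
    (σ τ : Equiv.Perm (Fin N))
    (hμ : μ = hA.eigenvalues ∘ σ) (hν : ν = hB.eigenvalues ∘ τ)
    (hμa : Antitone μ) (hνa : Antitone ν)
    (f : ℝ → ℝ) (hf : ContDiff ℝ 1 f)
    (C : ℝ) (hC : ∀ x, |deriv f x| ≤ C) :
    |(1 / (N : ℝ)) * ∑ i, f (μ i) - (1 / (N : ℝ)) * ∑ i, f (ν i)| ^ 2
      ≤ (C ^ 2 / (N : ℝ)) * ∑ i : Fin N, ∑ j : Fin N, (A i j - B i j) ^ 2 := by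
  have hNpos : (0 : ℝ) < N := by exact_mod_cast hN
  have hC0 : 0 ≤ C := le_trans (abs_nonneg _) (hC 0)
  -- Monovarying
  have hmono : Monovary μ ν := by
    intro i j hij
    rcases le_total i j with hle | hle
    · rcases eq_or_lt_of_le hle with rfl | hlt
      · exact le_rfl
      · exact absurd (hνa hle) (not_le.mpr hij)
    · exact hμa hle
  -- spectral decompositions
  set U0 : Matrix (Fin N) (Fin N) ℝ := (hA.eigenvectorUnitary : Matrix (Fin N) (Fin N) ℝ)
  set V0 : Matrix (Fin N) (Fin N) ℝ := (hB.eigenvectorUnitary : Matrix (Fin N) (Fin N) ℝ)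
  have hU0 : star U0 * U0 = 1 := by
    have := hA.eigenvectorUnitary.2
    rw [Unitary.mem_iff] at this
    exact this.1
  have hV0 : star V0 * V0 = 1 := by
    have := hB.eigenvectorUnitary.2
    rw [Unitary.mem_iff] at this
    exact this.1
  have hAspec : A = U0 * diagonal hA.eigenvalues * star U0 := by
    have h := hA.spectral_theorem
    have hid : (RCLike.ofReal ∘ hA.eigenvalues : Fin N → ℝ) = hA.eigenvalues := by
      funext i; simp
    rwa [hid] at h
  have hBspec : B = V0 * diagonal hB.eigenvalues * star V0 := by
    have h := hB.spectral_theorem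
    have hid : (RCLike.ofReal ∘ hB.eigenvalues : Fin N → ℝ) = hB.eigenvalues := by
      funext i; simp
    rwa [hid] at h
  set U : Matrix (Fin N) (Fin N) ℝ := U0.submatrix id ⇑σ with hUdef
  set V : Matrix (Fin N) (Fin N) ℝ := V0.submatrix id ⇑τ with hVdef
  have hU : star U * U = 1 := perm_unitary U0 σ hU0
  have hV : star V * V = 1 := perm_unitary V0 τ hV0
  have hAU : A = U * diagonal μ * star U := by
    rw [hAspec, hμ]; exact perm_decomp U0 hA.eigenvalues σ
  have hBV : B = V * diagonal ν * star V := by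
    rw [hBspec, hν]; exact perm_decomp V0 hB.eigenvalues τ
  -- Hoffman–Wielandt
  have hw : ∑ i, (μ i - ν i) ^ 2 ≤ ∑ i, ∑ j, (A i j - B i j) ^ 2 := by
    rw [hAU, hBV]
    exact hw_key U V μ ν hU hV hmono
  -- Lipschitz estimate
  have hlip : ∀ x y : ℝ, |f x - f y| ≤ C * |x - y| := by
    intro x y
    have := Convex.norm_image_sub_le_of_norm_deriv_le
      (f := f) (s := Set.univ) (C := C)
      (fun z _ => (hf.differentiable one_ne_zero).differentiableAt)
      (fun z _ => by simpa [Real.norm_eq_abs] using hC z)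
      convex_univ (Set.mem_univ y) (Set.mem_univ x)
    simpa [Real.norm_eq_abs] using this
  -- pointwise square bound
  have hsq : ∀ i, (f (μ i) - f (ν i)) ^ 2 ≤ C ^ 2 * (μ i - ν i) ^ 2 := by
    intro i
    have h1 := hlip (μ i) (ν i)
    have h2 : |f (μ i) - f (ν i)| ^ 2 ≤ (C * |μ i - ν i|) ^ 2 :=
      pow_le_pow_left₀ (abs_nonneg _) h1 2
    calc (f (μ i) - f (ν i)) ^ 2 = |f (μ i) - f (ν i)| ^ 2 := (sq_abs _).symm
      _ ≤ (C * |μ i - ν i|) ^ 2 := h2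
      _ = C ^ 2 * (μ i - ν i) ^ 2 := by rw [mul_pow, sq_abs]
  -- Cauchy–Schwarz
  have hcs : (∑ i, (f (μ i) - f (ν i))) ^ 2 ≤ N * ∑ i, (f (μ i) - f (ν i)) ^ 2 := by
    have := sq_sum_le_card_mul_sum_sq (s := (Finset.univ : Finset (Fin N)))
      (f := fun i => f (μ i) - f (ν i))
    simpa using this
  calc |(1 / (N : ℝ)) * ∑ i, f (μ i) - (1 / (N : ℝ)) * ∑ i, f (ν i)| ^ 2
      = (1 / (N : ℝ)) ^ 2 * (∑ i, (f (μ i) - f (ν i))) ^ 2 := by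
        rw [sq_abs, ← mul_sub, ← Finset.sum_sub_distrib, mul_pow]
    _ ≤ (1 / (N : ℝ)) ^ 2 * (N * ∑ i, (f (μ i) - f (ν i)) ^ 2) := by
        exact mul_le_mul_of_nonneg_left hcs (by positivity)
    _ ≤ (1 / (N : ℝ)) ^ 2 * (N * (C ^ 2 * ∑ i, (μ i - ν i) ^ 2)) := by
        simp only [Finset.mul_sum]
        gcongr with i _
        have := hsq i
        nlinarith [sq_nonneg (1 / (N:ℝ)), hNpos]
    _ ≤ (1 / (N : ℝ)) ^ 2 * (N * (C ^ 2 * ∑ i, ∑ j, (A i j - B i j) ^ 2)) := by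
        gcongr
    _ = (C ^ 2 / (N : ℝ)) * ∑ i : Fin N, ∑ j : Fin N, (A i j - B i j) ^ 2 := by
        field_simp
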